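/- For the rectangle E^r = [0,r] × [0, π/r] with r > 0, the interaction energy satisfies ∫_{E^r}∫_{E^r} log(1/|x−y|) dx dy ≤ π²(1 − log(r/2)). -/

import Mathlib

set_option maxHeartbeats 1000000

open MeasureTheory

/-- The rectangle `[0,r] × [0, π/r]` in the Euclidean plane. -/
def rect (r : ℝ) : Set (EuclideanSpace ℝ (Fin 2)) :=
  {p | p 0 ∈ Set.Icc 0 r ∧ p 1 ∈ Set.Icc 0 (Real.pi / r)}

section Aux
open Real Set

lemma log_intable (c : ℝ) (hc : 0 ≤ c) : IntervalIntegrable Real.log volume 0 c := by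
  rw [intervalIntegrable_iff, uIoc_of_le hc]
  have hb : IntervalIntegrable (fun x : ℝ => 2 * x ^ (-(1/2) : ℝ) + x) volume 0 c := by
    exact ((intervalIntegral.intervalIntegrable_rpow' (by norm_num)).const_mul 2).add
      (intervalIntegral.intervalIntegrable_id)
  rw [intervalIntegrable_iff, uIoc_of_le hc] at hb
  refine hb.mono' (Real.measurable_log.aestronglyMeasurable) ?_
  filter_upwards [ae_restrict_mem measurableSet_Ioc] with x hx
  have hx0 : 0 < x := hx.1
  rcases le_or_gt x 1 with h1 | h1
  · have hs : 0 < Real.sqrt x := Real.sqrt_pos.2 hx0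
    have : -Real.log x = 2 * Real.log (Real.sqrt x)⁻¹ := by
      rw [Real.log_inv, Real.log_sqrt hx0.le]; ring
    have h2 : Real.log (Real.sqrt x)⁻¹ ≤ (Real.sqrt x)⁻¹ - 1 :=
      Real.log_le_sub_one_of_pos (by positivity)
    have hlx : Real.log x ≤ 0 := Real.log_nonpos hx0.le h1
    have habs : ‖Real.log x‖ = -Real.log x := by
      rw [Real.norm_eq_abs, abs_of_nonpos hlx]
    rw [habs, this]
    have : x ^ (-(1/2) : ℝ) = (Real.sqrt x)⁻¹ := by
      rw [Real.sqrt_eq_rpow, ← Real.rpow_neg hx0.le]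
    rw [this]
    nlinarith [h2, hx0.le]
  · have hlx : 0 ≤ Real.log x := Real.log_nonneg h1.le
    rw [Real.norm_eq_abs, abs_of_nonneg hlx]
    have := Real.log_le_sub_one_of_pos hx0
    have hp : 0 ≤ x ^ (-(1/2) : ℝ) := Real.rpow_nonneg hx0.le _
    nlinarith

lemma log_integral (c : ℝ) (hc : 0 ≤ c) :
    ∫ x in (0:ℝ)..c, Real.log x = c * Real.log c - c := by
  rcases eq_or_lt_of_le hc with rfl | hc
  · simp
  have := intervalIntegral.integral_eq_sub_of_hasDerivAt_of_le hc.le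
    (f := fun x => x * Real.log x - x) (f' := Real.log)
    (by fun_prop) -- continuity
    (fun x hx => by
      have := Real.hasDerivAt_mul_log (ne_of_gt hx.1)
      have h := this.sub (hasDerivAt_id' x)
      rw [show Real.log x + 1 - 1 = Real.log x by ring] at h
      exact h)
    (log_intable c hc.le)
  simpa using this

lemma abs_eq_on_le (c : ℝ) (hc : 0 ≤ c) :
    Set.EqOn (fun t => Real.log |c - t|) (fun t => Real.log (c - t)) (Set.uIcc 0 c) := by
  intro t ht
  rw [Set.uIcc_of_le hc] at ht
  simp only [abs_of_nonneg (sub_nonneg.2 ht.2)]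

lemma abs_eq_on_ge (c r : ℝ) (hcr : c ≤ r) :
    Set.EqOn (fun t => Real.log |c - t|) (fun t => Real.log (t - c)) (Set.uIcc c r) := by
  intro t ht
  rw [Set.uIcc_of_le hcr] at ht
  simp only [abs_of_nonpos (sub_nonpos.2 ht.1), neg_sub]

lemma II_left (c : ℝ) (hc : 0 ≤ c) :
    IntervalIntegrable (fun t => Real.log |c - t|) volume 0 c := by
  have h1 : IntervalIntegrable (fun t => Real.log (c - t)) volume 0 c := by
    simpa using ((log_intable c hc).comp_sub_left c).symm
  exact h1.congr_ae (Filter.eventuallyEq_of_mem (self_mem_ae_restrict measurableSet_uIoc)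
    (fun t ht => (abs_eq_on_le c hc (uIoc_subset_uIcc ht)).symm))

lemma II_right (c r : ℝ) (hcr : c ≤ r) :
    IntervalIntegrable (fun t => Real.log |c - t|) volume c r := by
  have h1 : IntervalIntegrable (fun t => Real.log (t - c)) volume c r := by
    simpa using (log_intable (r - c) (by linarith)).comp_sub_right c
  exact h1.congr_ae (Filter.eventuallyEq_of_mem (self_mem_ae_restrict measurableSet_uIoc)
    (fun t ht => (abs_eq_on_ge c r hcr (uIoc_subset_uIcc ht)).symm))

lemma int_left (c : ℝ) (hc : 0 ≤ c) :
    ∫ t in (0:ℝ)..c, Real.log |c - t| = c * Real.log c - c := by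
  rw [intervalIntegral.integral_congr (abs_eq_on_le c hc)]
  rw [intervalIntegral.integral_comp_sub_left (fun u => Real.log u) c]
  simpa using log_integral c hc

lemma int_right (c r : ℝ) (hc : 0 ≤ c) (hcr : c ≤ r) :
    ∫ t in c..r, Real.log |c - t| = (r - c) * Real.log (r - c) - (r - c) := by
  rw [intervalIntegral.integral_congr (abs_eq_on_ge c r hcr)]
  rw [intervalIntegral.integral_comp_sub_right (fun u => Real.log u) c]
  simpa using log_integral (r - c) (by linarith)

lemma oneD_II (c r : ℝ) (hc : c ∈ Set.Icc 0 r) :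
    IntegrableOn (fun t => -Real.log |c - t|) (Set.Icc 0 r) volume := by
  have h := (II_left c hc.1).trans (II_right c r hc.2)
  have h2 := (intervalIntegrable_iff_integrableOn_Ioc_of_le (le_trans hc.1 hc.2)).1 h
  exact IntegrableOn.congr_set_ae h2.neg Ioc_ae_eq_Icc.symm

lemma oneD_bound (c r : ℝ) (hr : 0 < r) (hc : c ∈ Set.Icc 0 r) :
    ∫ t in Set.Icc 0 r, -Real.log |c - t| ≤ r * (1 - Real.log (r / 2)) := by
  have hab : (0:ℝ) ≤ r := hr.le
  have hIcc : ∫ t in Set.Icc 0 r, -Real.log |c - t|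
      = ∫ t in (0:ℝ)..r, -Real.log |c - t| := by
    rw [intervalIntegral.integral_of_le hab, integral_Icc_eq_integral_Ioc]
  have hsplit : ∫ t in (0:ℝ)..r, Real.log |c - t|
      = (c * Real.log c - c) + ((r - c) * Real.log (r - c) - (r - c)) := by
    rw [← intervalIntegral.integral_add_adjacent_intervals (II_left c hc.1) (II_right c r hc.2),
      int_left c hc.1, int_right c r hc.1 hc.2]
  have hneg : ∫ t in (0:ℝ)..r, -Real.log |c - t|
      = -((c * Real.log c - c) + ((r - c) * Real.log (r - c) - (r - c))) := by
    rw [← hsplit, intervalIntegral.integral_neg]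
  -- convexity
  have hconv := Real.convexOn_mul_log.2 (Set.mem_Ici.2 hc.1)
    (Set.mem_Ici.2 (sub_nonneg.2 hc.2)) (by norm_num : (0:ℝ) ≤ 1/2)
    (by norm_num : (0:ℝ) ≤ 1/2) (by norm_num)
  simp only [smul_eq_mul] at hconv
  have hmid : (1/2 : ℝ) * c + (1/2) * (r - c) = r / 2 := by ring
  rw [hmid] at hconv
  rw [hIcc, hneg]
  have hr2 : Real.log (r/2) * r = r * Real.log (r/2) := by ring
  nlinarith [hconv]

noncomputable def T : EuclideanSpace ℝ (Fin 2) ≃ᵐ ℝ × ℝ :=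
  (MeasurableEquiv.toLp 2 (Fin 2 → ℝ)).symm.trans (MeasurableEquiv.piFinTwo fun _ => ℝ)

lemma T_apply (x : EuclideanSpace ℝ (Fin 2)) : T x = (x 0, x 1) := rfl

lemma hT : MeasurePreserving T volume volume := by
  have h1 := EuclideanSpace.volume_preserving_symm_measurableEquiv_toLp (Fin 2)
  have h2 := measurePreserving_piFinTwo (fun _ : Fin 2 => (volume : Measure ℝ))
  rw [← volume_pi] at h2
  rw [MeasureTheory.Measure.volume_eq_prod]
  exact h2.comp h1

lemma rect_preimage (r : ℝ) :
    rect r = T ⁻¹' (Set.Icc 0 r ×ˢ Set.Icc 0 (Real.pi / r)) := by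
  ext p
  simp only [rect, T_apply, Set.mem_preimage, Set.mem_prod, Set.mem_setOf_eq]

lemma reduce_integral (r : ℝ) (hr : 0 < r) (φ : ℝ → ℝ) :
    ∫ y in rect r, φ (y 0) = (Real.pi / r) * ∫ t in Set.Icc 0 r, φ t := by
  rw [rect_preimage]
  have key := hT.setIntegral_preimage_emb T.measurableEmbedding (fun z : ℝ × ℝ => φ z.1)
    (Set.Icc 0 r ×ˢ Set.Icc 0 (Real.pi / r))
  rw [MeasureTheory.Measure.volume_eq_prod, ← Measure.prod_restrict, integral_fun_fst,
    measureReal_restrict_apply_univ, measureReal_def, Real.volume_Icc, smul_eq_mul,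
    ENNReal.toReal_ofReal (by rw [sub_zero]; positivity), sub_zero] at key
  exact key

lemma reduce_integrable (r : ℝ) (hr : 0 < r) (φ : ℝ → ℝ)
    (hφ : IntegrableOn φ (Set.Icc 0 r)) :
    IntegrableOn (fun y => φ (y 0)) (rect r) := by
  rw [rect_preimage]
  have h : IntegrableOn (fun z : ℝ × ℝ => φ z.1) (Set.Icc 0 r ×ˢ Set.Icc 0 (Real.pi / r)) := by
    rw [IntegrableOn, MeasureTheory.Measure.volume_eq_prod, ← Measure.prod_restrict]
    have h1 : Integrable (fun _ : ℝ => (1:ℝ)) (volume.restrict (Set.Icc 0 (Real.pi / r))) := by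
      apply integrable_const
    have h2 := MeasureTheory.Integrable.mul_prod (L := ℝ) hφ h1
    simpa only [mul_one] using h2
  exact (hT.integrableOn_comp_preimage T.measurableEmbedding).2 h

lemma coord_le_dist (x y : EuclideanSpace ℝ (Fin 2)) (i : Fin 2) :
    |x i - y i| ≤ dist x y := by
  rw [EuclideanSpace.dist_eq]
  rw [show |x i - y i| = Real.sqrt (|x i - y i| ^ 2) by
    rw [Real.sqrt_sq (abs_nonneg _)]]
  apply Real.sqrt_le_sqrt
  have : dist (x i) (y i) ^ 2 = |x i - y i| ^ 2 := by rw [Real.dist_eq]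
  rw [← this]
  exact Finset.single_le_sum (f := fun j => dist (x j) (y j) ^ 2)
    (fun j _ => sq_nonneg _) (Finset.mem_univ i)

lemma dist_le_D (r : ℝ) (hr : 0 < r) {x y : EuclideanSpace ℝ (Fin 2)}
    (hx : x ∈ rect r) (hy : y ∈ rect r) :
    dist x y ≤ Real.sqrt (r ^ 2 + (Real.pi / r) ^ 2) := by
  rw [EuclideanSpace.dist_eq, Fin.sum_univ_two]
  apply Real.sqrt_le_sqrt
  obtain ⟨⟨hx0, hx0'⟩, hx1, hx1'⟩ := hx
  obtain ⟨⟨hy0, hy0'⟩, hy1, hy1'⟩ := hy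
  have h0 : dist (x 0) (y 0) ≤ r := by
    rw [Real.dist_eq, abs_sub_le_iff]; constructor <;> linarith
  have h1 : dist (x 1) (y 1) ≤ Real.pi / r := by
    rw [Real.dist_eq, abs_sub_le_iff]; constructor <;> linarith
  have := dist_nonneg (x := x 0) (y := y 0)
  have := dist_nonneg (x := x 1) (y := y 1)
  nlinarith

lemma D_ge_one (r : ℝ) (hr : 0 < r) : 1 ≤ Real.sqrt (r ^ 2 + (Real.pi / r) ^ 2) := by
  rw [show (1:ℝ) = Real.sqrt 1 by simp]
  apply Real.sqrt_le_sqrt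
  have h := Real.pi_gt_three
  nlinarith [sq_nonneg (r - Real.pi / r), mul_pos hr hr,
    (div_pos Real.pi_pos hr), mul_div_cancel₀ Real.pi (ne_of_gt hr)]

lemma null_coord (c : ℝ) : volume {y : EuclideanSpace ℝ (Fin 2) | y 0 = c} = 0 := by
  have h : {y : EuclideanSpace ℝ (Fin 2) | y 0 = c} = T ⁻¹' ({c} ×ˢ (Set.univ : Set ℝ)) := by
    ext y; simp [T_apply, eq_comm]
  rw [h, hT.measure_preimage_equiv, MeasureTheory.Measure.volume_eq_prod,
    Measure.prod_prod, Real.volume_singleton, zero_mul]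

lemma measure_rect (r : ℝ) (hr : 0 < r) : volume (rect r) = ENNReal.ofReal Real.pi := by
  rw [rect_preimage, hT.measure_preimage_equiv, MeasureTheory.Measure.volume_eq_prod,
    Measure.prod_prod, Real.volume_Icc, Real.volume_Icc, sub_zero, sub_zero,
    ← ENNReal.ofReal_mul hr.le]
  rw [mul_div_cancel₀ Real.pi (ne_of_gt hr)]

lemma rect_meas (r : ℝ) : MeasurableSet (rect r) := by
  rw [rect_preimage]
  exact T.measurable (measurableSet_Icc.prod measurableSet_Icc)

lemma inner_bound (r : ℝ) (hr : 0 < r) (x : EuclideanSpace ℝ (Fin 2)) (hx : x ∈ rect r) :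
    IntegrableOn (fun y => Real.log (1 / dist x y)) (rect r) ∧
    ∫ y in rect r, Real.log (1 / dist x y) ≤ Real.pi * (1 - Real.log (r / 2)) ∧
    Real.pi * (-Real.log (Real.sqrt (r ^ 2 + (Real.pi / r) ^ 2)))
      ≤ ∫ y in rect r, Real.log (1 / dist x y) := by
  set D := Real.sqrt (r ^ 2 + (Real.pi / r) ^ 2) with hD
  have hD1 : 1 ≤ D := D_ge_one r hr
  have hlogD : 0 ≤ Real.log D := Real.log_nonneg hD1
  have hsimp : (fun y : EuclideanSpace ℝ (Fin 2) => Real.log (1 / dist x y))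
      = fun y => -Real.log (dist x y) := by
    funext y; rw [one_div, Real.log_inv]
  set φ : ℝ → ℝ := fun t => -Real.log |x 0 - t| with hφ
  have hφInt : IntegrableOn φ (Set.Icc 0 r) := oneD_II (x 0) r hx.1
  set g : EuclideanSpace ℝ (Fin 2) → ℝ := fun y => φ (y 0) with hg
  have hg_int : IntegrableOn g (rect r) := reduce_integrable r hr φ hφInt
  have hae : ∀ᵐ y ∂(volume.restrict (rect r)), y 0 ≠ x 0 := by
    apply ae_restrict_of_ae
    rw [ae_iff]
    have : {y : EuclideanSpace ℝ (Fin 2) | ¬ y 0 ≠ x 0} = {y | y 0 = x 0} := by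
      ext y; simp
    rw [this]
    exact null_coord (x 0)
  have hmem : ∀ᵐ y ∂(volume.restrict (rect r)), y ∈ rect r :=
    ae_restrict_mem (rect_meas r)
  have hfg : ∀ᵐ y ∂(volume.restrict (rect r)), -Real.log (dist x y) ≤ g y := by
    filter_upwards [hae] with y hy
    have h1 : 0 < |x 0 - y 0| := abs_pos.2 (sub_ne_zero.2 (Ne.symm hy))
    have h2 : |x 0 - y 0| ≤ dist x y := coord_le_dist x y 0
    exact neg_le_neg (Real.log_le_log h1 h2)
  have hf_meas : AEStronglyMeasurable (fun y => -Real.log (dist x y))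
      (volume.restrict (rect r)) :=
    ((Real.measurable_log.comp
      ((Continuous.dist continuous_const continuous_id).measurable)).neg).aestronglyMeasurable
  have hbound : ∀ᵐ y ∂(volume.restrict (rect r)),
      ‖-Real.log (dist x y)‖ ≤ Real.log D + |g y| := by
    filter_upwards [hae, hmem] with y hy hym
    have h1 : 0 < |x 0 - y 0| := abs_pos.2 (sub_ne_zero.2 (Ne.symm hy))
    have h2 : |x 0 - y 0| ≤ dist x y := coord_le_dist x y 0
    have hd0 : 0 < dist x y := lt_of_lt_of_le h1 h2
    have hdD : dist x y ≤ D := dist_le_D r hr hx hym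
    have hup : Real.log (dist x y) ≤ Real.log D := Real.log_le_log hd0 hdD
    have hlow : -|g y| ≤ Real.log (dist x y) := by
      have hl1 : Real.log |x 0 - y 0| ≤ Real.log (dist x y) := Real.log_le_log h1 h2
      have hl2 : -|g y| ≤ Real.log |x 0 - y 0| := by
        have hgy : g y = -Real.log |x 0 - y 0| := rfl
        rw [hgy, abs_neg]
        exact neg_abs_le _
      linarith
    rw [norm_neg, Real.norm_eq_abs]
    rw [abs_le]
    constructor
    · have := abs_nonneg (g y); linarith
    · have := abs_nonneg (g y); linarith
  have hconst_int : IntegrableOn (fun _ : EuclideanSpace ℝ (Fin 2) => Real.log D) (rect r) := by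
    rw [integrableOn_const_iff]
    right
    rw [measure_rect r hr]
    exact ENNReal.ofReal_lt_top
  have hG_int : Integrable (fun y => Real.log D + |g y|) (volume.restrict (rect r)) :=
    hconst_int.add hg_int.abs
  have hf_int : Integrable (fun y => -Real.log (dist x y)) (volume.restrict (rect r)) :=
    hG_int.mono' hf_meas hbound
  rw [hsimp]
  refine ⟨hf_int, ?_, ?_⟩
  · have step1 : ∫ y in rect r, -Real.log (dist x y) ≤ ∫ y in rect r, g y :=
      integral_mono_ae hf_int hg_int hfg
    have step2 : ∫ y in rect r, g y = (Real.pi / r) * ∫ t in Set.Icc 0 r, φ t :=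
      reduce_integral r hr φ
    have step3 : ∫ t in Set.Icc 0 r, φ t ≤ r * (1 - Real.log (r / 2)) :=
      oneD_bound (x 0) r hr hx.1
    have step4 : (Real.pi / r) * ∫ t in Set.Icc 0 r, φ t
        ≤ (Real.pi / r) * (r * (1 - Real.log (r / 2))) :=
      mul_le_mul_of_nonneg_left step3 (div_nonneg Real.pi_pos.le hr.le)
    have step5 : (Real.pi / r) * (r * (1 - Real.log (r / 2)))
        = Real.pi * (1 - Real.log (r / 2)) := by
      field_simp
    linarith
  · have hlb : ∀ᵐ y ∂(volume.restrict (rect r)),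
        (fun _ => -Real.log D) y ≤ -Real.log (dist x y) := by
      filter_upwards [hae, hmem] with y hy hym
      have h1 : 0 < |x 0 - y 0| := abs_pos.2 (sub_ne_zero.2 (Ne.symm hy))
      have hd0 : 0 < dist x y := lt_of_lt_of_le h1 (coord_le_dist x y 0)
      have hdD : dist x y ≤ D := dist_le_D r hr hx hym
      exact neg_le_neg (Real.log_le_log hd0 hdD)
    have hc2 : IntegrableOn (fun _ : EuclideanSpace ℝ (Fin 2) => -Real.log D) (rect r) := by
      rw [integrableOn_const_iff]
      right
      rw [measure_rect r hr]
      exact ENNReal.ofReal_lt_top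
    have := integral_mono_ae hc2 hf_int hlb
    rw [setIntegral_const, measureReal_def, measure_rect r hr,
      ENNReal.toReal_ofReal Real.pi_pos.le, smul_eq_mul] at this
    linarith

theorem main_thm (r : ℝ) (hr : 0 < r) :
    ∫ x in rect r, ∫ y in rect r, Real.log (1 / dist x y)
      ≤ Real.pi ^ 2 * (1 - Real.log (r / 2)) := by
  set D := Real.sqrt (r ^ 2 + (Real.pi / r) ^ 2) with hD
  set F : EuclideanSpace ℝ (Fin 2) → ℝ :=
    fun x => ∫ y in rect r, Real.log (1 / dist x y) with hF
  set C1 := Real.pi * (1 - Real.log (r / 2)) with hC1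
  set C2 := Real.pi * (-Real.log D) with hC2
  have hFle : ∀ x ∈ rect r, F x ≤ C1 := fun x hx => (inner_bound r hr x hx).2.1
  have hFge : ∀ x ∈ rect r, C2 ≤ F x := fun x hx => (inner_bound r hr x hx).2.2
  have hmemx : ∀ᵐ x ∂(volume.restrict (rect r)), x ∈ rect r := ae_restrict_mem (rect_meas r)
  have hFmeas : AEStronglyMeasurable F (volume.restrict (rect r)) := by
    have hm : StronglyMeasurable
        (fun p : EuclideanSpace ℝ (Fin 2) × EuclideanSpace ℝ (Fin 2) =>
          Real.log (1 / dist p.1 p.2)) := by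
      apply Measurable.stronglyMeasurable
      exact Real.measurable_log.comp (Measurable.div measurable_const continuous_dist.measurable)
    exact (hm.integral_prod_right').aestronglyMeasurable
  have hCint : Integrable (fun _ : EuclideanSpace ℝ (Fin 2) => C1)
      (volume.restrict (rect r)) := by
    rw [← IntegrableOn, integrableOn_const_iff]
    right
    rw [measure_rect r hr]
    exact ENNReal.ofReal_lt_top
  have hGint : Integrable (fun _ : EuclideanSpace ℝ (Fin 2) => |C1| + |C2|)
      (volume.restrict (rect r)) := by
    rw [← IntegrableOn, integrableOn_const_iff]
    right
    rw [measure_rect r hr]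
    exact ENNReal.ofReal_lt_top
  have hFint : Integrable F (volume.restrict (rect r)) := by
    apply hGint.mono' hFmeas
    filter_upwards [hmemx] with x hx
    rw [Real.norm_eq_abs, abs_le]
    have h1 := hFle x hx
    have h2 := hFge x hx
    constructor
    · have := abs_nonneg C1; have := neg_abs_le C2; linarith
    · have := abs_nonneg C2; have := le_abs_self C1; linarith
  have hle : ∫ x in rect r, F x ≤ ∫ x in rect r, C1 := by
    apply integral_mono_ae hFint hCint
    filter_upwards [hmemx] with x hx using hFle x hx
  rw [setIntegral_const, measureReal_def, measure_rect r hr, ENNReal.toReal_ofReal Real.pi_pos.le,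
    smul_eq_mul] at hle
  calc ∫ x in rect r, F x ≤ Real.pi * C1 := hle
    _ = Real.pi ^ 2 * (1 - Real.log (r / 2)) := by rw [hC1]; ring

end Aux

theorem rect_interaction_upper_bound (r : ℝ) (hr : 0 < r) :
    ∫ x in rect r, ∫ y in rect r, Real.log (1 / dist x y)
      ≤ Real.pi ^ 2 * (1 - Real.log (r / 2)) := by
  exact main_thm r hr
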